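/- There exists a group homomorphism Φ : W → Out(F) sending the Coxeter generator x to [L], y to [R], z to [τ], and w to [τ ∘ χ²]. Equivalently, these four outer classes satisfy the Coxeter relations of M: each of [L], [R], [τ], [τ ∘ χ²] squares to the identity in Out(F), ([L]·[R])² = 1, and ([L]·[τ])⁴ = ([R]·[τ])⁴ = ([L]·[τ∘χ²])⁴ = ([R]·[τ∘χ²])⁴ = 1. -/

import Mathlib

/-!
Let `F = ⟨a, b, t ∣ a² = b² = 1⟩ ≅ C₂ * C₂ * ℤ`, realized as a `PresentedGroup`.
-/

namespace ABZ

/-- Generators of the presentation `⟨a, b, t ∣ a² = b² = 1⟩`. -/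
inductive Gen : Type
  | a | b | t
  deriving DecidableEq

open Gen

/-- The relators `a²` and `b²`. -/
def rels : Set (FreeGroup Gen) := {FreeGroup.of a ^ 2, FreeGroup.of b ^ 2}

/-- The group `F = ⟨a, b, t ∣ a² = b² = 1⟩ ≅ C₂ * C₂ * ℤ`. -/
abbrev F : Type := PresentedGroup rels

/-- The generator `a` of `F`. -/
def ga : F := PresentedGroup.of a
/-- The generator `b` of `F`. -/
def gb : F := PresentedGroup.of b
/-- The generator `t` of `F`. -/
def gt : F := PresentedGroup.of t

/-- The inner automorphisms form a normal subgroup of `MulAut G`. -/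
instance innNormal (G : Type*) [Group G] : ((MulAut.conj : G →* MulAut G).range).Normal := by
  constructor
  rintro x ⟨g, rfl⟩ f
  refine ⟨f g, ?_⟩
  ext y
  simp [MulAut.conj_apply, mul_assoc, map_mul]

/-- The outer automorphism group `Out(G) = MulAut G ⧸ Inn(G)`. -/
abbrev Out (G : Type*) [Group G] : Type _ := MulAut G ⧸ (MulAut.conj : G →* MulAut G).range

/-- The outer class `[φ]` of an automorphism `φ`. -/
def out {G : Type*} [Group G] (φ : MulAut G) : Out G := QuotientGroup.mk φ

/-- `σ : a ↦ b, b ↦ a, t ↦ t`. -/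
def IsSigma (σ : MulAut F) : Prop := σ ga = gb ∧ σ gb = ga ∧ σ gt = gt
/-- `τ : a ↦ a, b ↦ b, t ↦ t⁻¹`. -/
def IsTau (τ : MulAut F) : Prop := τ ga = ga ∧ τ gb = gb ∧ τ gt = gt⁻¹
/-- `L : a ↦ a, b ↦ b, t ↦ a·t`. -/
def IsL (L : MulAut F) : Prop := L ga = ga ∧ L gb = gb ∧ L gt = ga * gt
/-- `R : a ↦ a, b ↦ b, t ↦ t·b`. -/
def IsR (R : MulAut F) : Prop := R ga = ga ∧ R gb = gb ∧ R gt = gt * gb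
/-- `χ : a ↦ a, b ↦ t⁻¹·b·t, t ↦ t`. -/
def IsChi (χ : MulAut F) : Prop := χ ga = ga ∧ χ gb = gt⁻¹ * gb * gt ∧ χ gt = gt

/-- Index set `{x, y, z, w}` for the Coxeter matrix. -/
inductive Idx : Type
  | x | y | z | w
  deriving DecidableEq

instance instFintypeIdx : Fintype Idx :=
  ⟨{Idx.x, Idx.y, Idx.z, Idx.w}, fun i => by cases i <;> simp⟩

/-- The entries of the Coxeter matrix: `M(x,y) = 2`,
`M(x,z) = M(y,z) = M(x,w) = M(y,w) = 4`, `M(z,w) = 0`, diagonal `1`. -/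
def Mfun : Idx → Idx → ℕ
  | .x, .x => 1 | .y, .y => 1 | .z, .z => 1 | .w, .w => 1
  | .x, .y => 2 | .y, .x => 2
  | .x, .z => 4 | .z, .x => 4
  | .y, .z => 4 | .z, .y => 4
  | .x, .w => 4 | .w, .x => 4
  | .y, .w => 4 | .w, .y => 4
  | .z, .w => 0 | .w, .z => 0

/-- The Coxeter matrix `M`. -/
def CoxM : CoxeterMatrix Idx where
  M := Matrix.of Mfun
  isSymm := by decide
  diagonal := by decide
  off_diagonal := by intro i i'; cases i <;> cases i' <;> decide

/-- The Coxeter group `W` of `M`, so that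
`W = ⟨x, y, z, w ∣ x² = y² = z² = w² = (xy)² = (xz)⁴ = (yz)⁴ = (xw)⁴ = (yw)⁴ = 1⟩`. -/
abbrev W : Type _ := CoxM.Group


lemma ga_mul_ga : ga * ga = 1 := by
  have : QuotientGroup.mk (s := Subgroup.normalClosure rels) (FreeGroup.of a ^ 2) = 1 := by
    rw [QuotientGroup.eq_one_iff]
    exact Subgroup.subset_normalClosure (by simp [rels])
  rw [ga, PresentedGroup.of, ← map_mul, ← pow_two]
  exact this

lemma gb_mul_gb : gb * gb = 1 := by
  have : QuotientGroup.mk (s := Subgroup.normalClosure rels) (FreeGroup.of b ^ 2) = 1 := by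
    rw [QuotientGroup.eq_one_iff]
    exact Subgroup.subset_normalClosure (by simp [rels])
  rw [gb, PresentedGroup.of, ← map_mul, ← pow_two]
  exact this

lemma ga_mul_ga_mul (x : F) : ga * (ga * x) = x := by
  rw [← mul_assoc, ga_mul_ga, one_mul]

lemma gb_mul_gb_mul (x : F) : gb * (gb * x) = x := by
  rw [← mul_assoc, gb_mul_gb, one_mul]

lemma ga_inv : ga⁻¹ = ga := by
  rw [inv_eq_iff_mul_eq_one, ga_mul_ga]

lemma gb_inv : gb⁻¹ = gb := by
  rw [inv_eq_iff_mul_eq_one, gb_mul_gb]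

lemma aut_ext {φ ψ : MulAut F} (h1 : φ ga = ψ ga) (h2 : φ gb = ψ gb)
    (h3 : φ gt = ψ gt) : φ = ψ := by
  have h : (φ : F →* F) = (ψ : F →* F) := by
    apply PresentedGroup.ext
    intro x
    cases x
    · exact h1
    · exact h2
    · exact h3
  ext x
  exact DFunLike.congr_fun h x

/-- There is a group homomorphism `Φ : W → Out(F)` with `Φ(x) = [L]`, `Φ(y) = [R]`,
`Φ(z) = [τ]`, `Φ(w) = [τ ∘ χ²]`. -/
theorem exists_coxeter_hom (τ L R χ : MulAut F) (hτ : IsTau τ)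
    (hL : IsL L) (hR : IsR R) (hχ : IsChi χ) :
    ∃ Φ : W →* Out F,
      Φ (CoxM.simple Idx.x) = out L ∧ Φ (CoxM.simple Idx.y) = out R ∧
      Φ (CoxM.simple Idx.z) = out τ ∧ Φ (CoxM.simple Idx.w) = out (τ * χ ^ 2) := by
  obtain ⟨hτa, hτb, hτt⟩ := hτ
  obtain ⟨hLa, hLb, hLt⟩ := hL
  obtain ⟨hRa, hRb, hRt⟩ := hR
  obtain ⟨hχa, hχb, hχt⟩ := hχ
  set ω : MulAut F := τ * χ ^ 2 with hω
  have key : ∀ (n : ℕ) (φ₁ φ₂ : MulAut F), (φ₁ * φ₂) ^ n = 1 →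
      ((out φ₁) * (out φ₂)) ^ n = (1 : Out F) := by
    intro n φ₁ φ₂ h
    have h2 : out ((φ₁ * φ₂) ^ n) = out (1 : MulAut F) := by rw [h]
    simpa [out] using h2
  have hLL : (L * L) ^ 1 = 1 := by
    rw [pow_one]
    refine aut_ext ?_ ?_ ?_ <;>
      simp [MulAut.mul_apply, map_mul, map_inv, hLa, hLb, hLt, ga_mul_ga, gb_mul_gb, ga_mul_ga_mul, ga_mul_ga, gb_mul_gb, ga_mul_ga_mul, gb_mul_gb_mul, mul_assoc]
  have hRR : (R * R) ^ 1 = 1 := by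
    rw [pow_one]
    refine aut_ext ?_ ?_ ?_ <;>
      simp [MulAut.mul_apply, map_mul, map_inv, hRa, hRb, hRt, gb_mul_gb,
        ga_mul_ga, gb_mul_gb, ga_mul_ga_mul, gb_mul_gb_mul, mul_assoc]
  have hττ : (τ * τ) ^ 1 = 1 := by
    rw [pow_one]
    refine aut_ext ?_ ?_ ?_ <;>
      simp [MulAut.mul_apply, map_mul, map_inv, hτa, hτb, hτt]
  have hωa : ω ga = ga := by
    simp [hω, MulAut.mul_apply, pow_two, hχa, hτa]
  have hωb : ω gb = gt * (gt * (gb * (gt⁻¹ * gt⁻¹))) := by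
    simp [hω, MulAut.mul_apply, pow_two, map_mul, map_inv, hχa, hχb, hχt,
      hτb, hτt, mul_assoc]
  have hωt : ω gt = gt⁻¹ := by
    simp [hω, MulAut.mul_apply, pow_two, hχt, hτt]
  have hωω : (ω * ω) ^ 1 = 1 := by
    rw [pow_one]
    refine aut_ext ?_ ?_ ?_ <;>
      simp [MulAut.mul_apply, map_mul, map_inv, hωa, hωb, hωt, ga_mul_ga, gb_mul_gb, ga_mul_ga_mul, gb_mul_gb_mul, mul_assoc]
  have hLR : (L * R) ^ 2 = 1 := by
    refine aut_ext ?_ ?_ ?_ <;>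
      simp [pow_two, MulAut.mul_apply, map_mul, map_inv, hLa, hLb, hLt,
        hRa, hRb, hRt, ga_mul_ga_mul, gb_mul_gb, mul_assoc]
  have hRL : (R * L) ^ 2 = 1 := by
    refine aut_ext ?_ ?_ ?_ <;>
      simp [pow_two, MulAut.mul_apply, map_mul, map_inv, hLa, hLb, hLt,
        hRa, hRb, hRt, ga_mul_ga_mul, gb_mul_gb, mul_assoc]
  have pow4 : ∀ φ : MulAut F, φ ^ 4 = φ * (φ * (φ * φ)) := by
    intro φ
    rw [show (4 : ℕ) = 2 + 2 by rfl, pow_add, pow_two]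
    group
  have hLτ : (L * τ) ^ 4 = 1 := by
    rw [pow4]
    refine aut_ext ?_ ?_ ?_ <;>
      simp [MulAut.mul_apply, map_mul, map_inv, hLa, hLb, hLt, hτa, hτb, hτt,
        ga_inv, ga_mul_ga, gb_mul_gb, ga_mul_ga_mul, ga_mul_ga, gb_mul_gb, ga_mul_ga_mul, gb_mul_gb_mul, mul_assoc]
  have hτL : (τ * L) ^ 4 = 1 := by
    rw [pow4]
    refine aut_ext ?_ ?_ ?_ <;>
      simp [MulAut.mul_apply, map_mul, map_inv, hLa, hLb, hLt, hτa, hτb, hτt,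
        ga_inv, ga_mul_ga, gb_mul_gb, ga_mul_ga_mul, ga_mul_ga, gb_mul_gb, ga_mul_ga_mul, gb_mul_gb_mul, mul_assoc]
  have hRτ : (R * τ) ^ 4 = 1 := by
    rw [pow4]
    refine aut_ext ?_ ?_ ?_ <;>
      simp [MulAut.mul_apply, map_mul, map_inv, hRa, hRb, hRt, hτa, hτb, hτt,
        gb_inv, ga_mul_ga, gb_mul_gb, ga_mul_ga_mul, gb_mul_gb_mul, mul_assoc]
  have hτR : (τ * R) ^ 4 = 1 := by
    rw [pow4]
    refine aut_ext ?_ ?_ ?_ <;>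
      simp [MulAut.mul_apply, map_mul, map_inv, hRa, hRb, hRt, hτa, hτb, hτt,
        gb_inv, ga_mul_ga, gb_mul_gb, ga_mul_ga_mul, gb_mul_gb_mul, mul_assoc]
  have hLω : (L * ω) ^ 4 = 1 := by
    rw [pow4]
    refine aut_ext ?_ ?_ ?_ <;>
      simp [MulAut.mul_apply, map_mul, map_inv, hLa, hLb, hLt, hωa, hωb, hωt,
        ga_inv, ga_mul_ga, gb_mul_gb, ga_mul_ga_mul, ga_mul_ga, gb_mul_gb, ga_mul_ga_mul, gb_mul_gb_mul, mul_assoc]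
  have hωL : (ω * L) ^ 4 = 1 := by
    rw [pow4]
    refine aut_ext ?_ ?_ ?_ <;>
      simp [MulAut.mul_apply, map_mul, map_inv, hLa, hLb, hLt, hωa, hωb, hωt,
        ga_inv, ga_mul_ga, gb_mul_gb, ga_mul_ga_mul, ga_mul_ga, gb_mul_gb, ga_mul_ga_mul, gb_mul_gb_mul, mul_assoc]
  have hRω : (R * ω) ^ 4 = 1 := by
    rw [pow4]
    refine aut_ext ?_ ?_ ?_ <;>
      simp [MulAut.mul_apply, map_mul, map_inv, hRa, hRb, hRt, hωa, hωb, hωt,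
        gb_inv, ga_mul_ga, gb_mul_gb, ga_mul_ga_mul, gb_mul_gb_mul, mul_assoc]
  have hωR : (ω * R) ^ 4 = 1 := by
    rw [pow4]
    refine aut_ext ?_ ?_ ?_ <;>
      simp [MulAut.mul_apply, map_mul, map_inv, hRa, hRb, hRt, hωa, hωb, hωt,
        gb_inv, ga_mul_ga, gb_mul_gb, ga_mul_ga_mul, gb_mul_gb_mul, mul_assoc]
  set f : Idx → Out F := fun i => match i with
    | Idx.x => out L
    | Idx.y => out R
    | Idx.z => out τ
    | Idx.w => out ω with hf
  have hlift : CoxM.IsLiftable f := by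
    intro i i'
    have hM : ∀ j j', CoxM.M j j' = Mfun j j' := fun _ _ => rfl
    cases i <;> cases i' <;>
      simp only [hf, hM, Mfun] <;>
      first
      | exact key _ _ _ hLL
      | exact key _ _ _ hRR
      | exact key _ _ _ hττ
      | exact key _ _ _ hωω
      | exact key _ _ _ hLR
      | exact key _ _ _ hRL
      | exact key _ _ _ hLτ
      | exact key _ _ _ hτL
      | exact key _ _ _ hRτ
      | exact key _ _ _ hτR
      | exact key _ _ _ hLω
      | exact key _ _ _ hωL
      | exact key _ _ _ hRω
      | exact key _ _ _ hωR
      | exact pow_zero _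
  refine ⟨CoxM.toCoxeterSystem.lift ⟨f, hlift⟩, ?_, ?_, ?_, ?_⟩ <;>
    · rw [← CoxM.toCoxeterSystem_simple]
      exact CoxM.toCoxeterSystem.lift_apply_simple hlift _

end ABZ
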